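/- I(z,β) ≪ K^{2An}·min(Pⁿ, |z|^{−n/2}) uniformly in z ∈ ℝ and β ∈ ℝⁿ, the implied constant depending only on F and A. -/

import Mathlib

open scoped BigOperators
open MeasureTheory

noncomputable section

/-- `e(t) = exp(2πit)` -/
def eC (t : ℝ) : ℂ := Complex.exp (2 * Real.pi * Complex.I * t)

/-- Euclidean length `|x|` of a vector in `ℝⁿ`. -/
def l2 (n : ℕ) (x : Fin n → ℝ) : ℝ := Real.sqrt (∑ i, x i ^ 2)

/-- The quadratic form `F(x) = ½ xᵀ𝓕x`. -/
def Qform (n : ℕ) (Fm : Matrix (Fin n) (Fin n) ℤ) (x : Fin n → ℝ) : ℝ :=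
  (1 / 2) * ∑ i, ∑ j, (Fm i j : ℝ) * x i * x j

/-- The Gaussian weight `w(x) = π^{-n/2} K^{An} exp(-|x - Px₀|² P^{-2} K^{2A})`, `K = log P`. -/
def gw (n : ℕ) (A P : ℝ) (x₀ x : Fin n → ℝ) : ℝ :=
  Real.pi ^ (-(n : ℝ) / 2) * Real.log P ^ (A * (n : ℝ)) *
    Real.exp (-(∑ i, (x i - P * x₀ i) ^ 2) * P ^ (-2 : ℝ) * Real.log P ^ (2 * A))

/-- `R_ω(N) = ∑_{x ∈ ℤⁿ, F(x) = N} ω(x)`. -/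
def Rcount (n : ℕ) (Fm : Matrix (Fin n) (Fin n) ℤ) (N : ℤ) (ω : (Fin n → ℝ) → ℝ) : ℝ :=
  ∑' x : Fin n → ℤ,
    if Qform n Fm (fun i => (x i : ℝ)) = (N : ℝ) then ω (fun i => (x i : ℝ)) else 0

/-- The complete exponential sum
`S_u(q,b,N) = ∑_{1≤s≤q, (s,q)=1} ∑_{v mod q} e_q(s̄ 𝔔(v,N) + us - b·v)`. -/
def expSum (n : ℕ) (Fm : Matrix (Fin n) (Fin n) ℤ) (N : ℤ) (q : ℕ) (u : ℤ)
    (b : Fin n → ℤ) : ℂ :=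
  ∑ s ∈ (Finset.Icc 1 q).filter (fun s => Nat.Coprime s q),
    ∑ v : Fin n → Fin q,
      eC (((((s : ZMod q)⁻¹).val : ℝ) * (Qform n Fm (fun i => ((v i : ℕ) : ℝ)) - (N : ℝ))
          + (u : ℝ) * (s : ℝ) - ∑ i, (b i : ℝ) * ((v i : ℕ) : ℝ)) / q)

/-- `S(α) = ∑_{x ∈ ℤⁿ} w(x) e(α 𝔔(x,N))`. -/
def Sa (n : ℕ) (Fm : Matrix (Fin n) (Fin n) ℤ) (N : ℤ) (A P : ℝ) (x₀ : Fin n → ℝ)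
    (α : ℝ) : ℂ :=
  ∑' x : Fin n → ℤ,
    (gw n A P x₀ (fun i => (x i : ℝ)) : ℂ) *
      eC (α * (Qform n Fm (fun i => (x i : ℝ)) - (N : ℝ)))

/-- `S_u(q,z) = ∑_{1≤s≤q, (s,q)=1} e_q(us) S(s̄/q + z)`. -/
def Suz (n : ℕ) (Fm : Matrix (Fin n) (Fin n) ℤ) (N : ℤ) (A P : ℝ) (x₀ : Fin n → ℝ)
    (q : ℕ) (u : ℤ) (z : ℝ) : ℂ :=
  ∑ s ∈ (Finset.Icc 1 q).filter (fun s => Nat.Coprime s q),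
    eC ((u : ℝ) * (s : ℝ) / q) * Sa n Fm N A P x₀ ((((s : ZMod q)⁻¹).val : ℝ) / q + z)

/-- `I(z,β) = ∫_{ℝⁿ} w(x) e(z 𝔔(x,N) + β·x) dx`. -/
def Iint (n : ℕ) (Fm : Matrix (Fin n) (Fin n) ℤ) (N : ℤ) (A P : ℝ) (x₀ : Fin n → ℝ)
    (z : ℝ) (β : Fin n → ℝ) : ℂ :=
  ∫ x : Fin n → ℝ, (gw n A P x₀ x : ℂ) * eC (z * (Qform n Fm x - (N : ℝ)) + ∑ i, β i * x i)

/-- The singular integral `I_w(N) = ∫_ℝ I(z,0) dz`. -/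
def Iw (n : ℕ) (Fm : Matrix (Fin n) (Fin n) ℤ) (N : ℤ) (A P : ℝ) (x₀ : Fin n → ℝ) : ℂ :=
  ∫ z : ℝ, Iint n Fm N A P x₀ z 0

/-- The singular series `𝔖(N) = ∑_{q≥1} q^{-n} S_0(q,0)`. -/
def singSeries (n : ℕ) (Fm : Matrix (Fin n) (Fin n) ℤ) (N : ℤ) : ℂ :=
  ∑' q : ℕ, ((q : ℂ) + 1) ^ (-(n : ℤ)) * expSum n Fm N (q + 1) 0 0

/-- The truncation threshold `B₀ = q K^{2+A} (P^{-1} + |z| P)`. -/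
def B0 (A P : ℝ) (q : ℕ) (z : ℝ) : ℝ :=
  (q : ℝ) * Real.log P ^ (2 + A) * (P⁻¹ + |z| * P)

/-- The dilated box `P((1+t)Γ + c)` where `B = Γ + c` is the hyperrectangle whose image
under `Mᵀ` has edges parallel to the coordinate axes, described by centre `c* = Mᵀc`
and half-edge lengths `γ`. -/
def boxSet (n : ℕ) (M : Matrix (Fin n) (Fin n) ℝ) (cstar γ : Fin n → ℝ) (t P : ℝ) :
    Set (Fin n → ℝ) :=
  {x | ∀ i, |M.transpose.mulVec x i - P * cstar i| ≤ P * (1 + t) * γ i}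

/-- The smoothed weight `W_±(x) = ∫_{(1±K^{-A/2})Γ + c} w(x; x₀) dx₀`, with `t = ±K^{-A/2}`. -/
def Wpm (n : ℕ) (M : Matrix (Fin n) (Fin n) ℝ) (cstar γ : Fin n → ℝ) (A P t : ℝ)
    (x : Fin n → ℝ) : ℝ :=
  ∫ x₀ in boxSet n M cstar γ t 1, gw n A P x₀ x

/-- `I_ω(N) = ∫_ℝ ∫_{ℝⁿ} ω(x) e(z(F(x)-N)) dx dz`. -/
def Iom (n : ℕ) (Fm : Matrix (Fin n) (Fin n) ℤ) (N : ℤ) (ω : (Fin n → ℝ) → ℝ) : ℂ :=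
  ∫ z : ℝ, ∫ x : Fin n → ℝ, (ω x : ℂ) * eC (z * (Qform n Fm x - (N : ℝ)))

end


noncomputable section
section Aux
open MeasureTheory Complex

lemma myGauss1 {a : ℝ} (ha : 0 < a) (m : ℝ) :
    ∫ t : ℝ, Real.exp (-a * (t - m) ^ 2) = Real.sqrt (Real.pi / a) := by
  rw [show (fun t : ℝ => Real.exp (-a * (t - m) ^ 2))
      = fun t => (fun s => Real.exp (-a * s ^ 2)) (t - m) from rfl,
    integral_sub_right_eq_self (fun s => Real.exp (-a * s ^ 2)) m, integral_gaussian]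

lemma myGauss1_int {a : ℝ} (ha : 0 < a) (m : ℝ) :
    Integrable (fun t : ℝ => Real.exp (-a * (t - m) ^ 2)) :=
  (integrable_exp_neg_mul_sq ha).comp_sub_right m

lemma myGaussPi_eq {n : ℕ} {a : ℝ} (m : Fin n → ℝ) (x : Fin n → ℝ) :
    Real.exp (-a * ∑ i, (x i - m i) ^ 2) = ∏ i, Real.exp (-a * (x i - m i) ^ 2) := by
  rw [← Real.exp_sum, Finset.mul_sum]

lemma myGaussPi {n : ℕ} {a : ℝ} (ha : 0 < a) (m : Fin n → ℝ) :
    ∫ x : Fin n → ℝ, Real.exp (-a * ∑ i, (x i - m i) ^ 2) = Real.sqrt (Real.pi / a) ^ n := by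
  simp_rw [myGaussPi_eq m]
  rw [MeasureTheory.integral_fintype_prod_volume_eq_prod (ι := Fin n)
    (f := fun i t => Real.exp (-a * (t - m i) ^ 2))]
  simp_rw [myGauss1 ha]
  simp

lemma myGaussPi_int {n : ℕ} {a : ℝ} (ha : 0 < a) (m : Fin n → ℝ) :
    Integrable (fun x : Fin n → ℝ => Real.exp (-a * ∑ i, (x i - m i) ^ 2)) := by
  simp_rw [myGaussPi_eq m]
  exact Integrable.fintype_prod (fun i => myGauss1_int ha (m i))

lemma myGauss1C {a : ℝ} (ha : 0 < a) (m ξ : ℝ) :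
    ‖∫ t : ℝ, (Real.exp (-a * (t - m) ^ 2) : ℂ) * Complex.exp ((ξ * t : ℝ) * Complex.I)‖
      = Real.sqrt (Real.pi / a) * Real.exp (-ξ ^ 2 / (4 * a)) := by
  have ha' : (0:ℝ) < 4 * a := by linarith
  have hb : ((-a : ℂ)).re < 0 := by simpa using ha
  have h1 : ∀ t : ℝ, (Real.exp (-a * (t - m) ^ 2) : ℂ) * Complex.exp ((ξ * t : ℝ) * Complex.I)
      = Complex.exp ((-a : ℂ) * t ^ 2 + ((2 * a * m : ℝ) + (ξ : ℂ) * Complex.I) * t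
          + (-(a * m ^ 2) : ℝ)) := by
    intro t
    rw [Complex.ofReal_exp, ← Complex.exp_add]
    congr 1
    push_cast
    ring
  simp_rw [h1]
  rw [integral_cexp_quadratic hb]
  rw [norm_mul]
  have h2 : ‖((Real.pi : ℂ) / -(-a : ℂ)) ^ (1 / 2 : ℂ)‖ = Real.sqrt (Real.pi / a) := by
    rw [show ((Real.pi : ℂ) / -(-a : ℂ)) = ((Real.pi / a : ℝ) : ℂ) by push_cast; ring]
    rw [Complex.norm_cpow_eq_rpow_re_of_pos (by positivity)]
    simp [Real.sqrt_eq_rpow]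
  rw [h2]
  congr 1
  have h3 : ((-(a * m ^ 2) : ℝ) : ℂ) - ((2 * a * m : ℝ) + (ξ : ℂ) * Complex.I) ^ 2 / (4 * (-a : ℂ))
      = ((-ξ ^ 2 / (4 * a) : ℝ) : ℂ) + ((m * ξ : ℝ) : ℂ) * Complex.I := by
    have ha0 : (a : ℂ) ≠ 0 := by exact_mod_cast ha.ne'
    field_simp
    ring_nf
    simp [Complex.I_sq]
    field_simp
    ring
  rw [h3]
  rw [Complex.norm_exp]
  congr 1
  simp only [Complex.add_re, Complex.mul_re, Complex.I_re, Complex.I_im, Complex.ofReal_re,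
    Complex.ofReal_im, mul_zero, mul_one, zero_mul, sub_zero, add_zero, zero_sub, zero_add]

lemma myGaussPiC_eq {n : ℕ} {a : ℝ} (m ξ : Fin n → ℝ) (x : Fin n → ℝ) :
    (Real.exp (-a * ∑ i, (x i - m i) ^ 2) : ℂ)
        * Complex.exp (((∑ i, ξ i * x i : ℝ) : ℂ) * Complex.I)
      = ∏ i, ((Real.exp (-a * (x i - m i) ^ 2) : ℂ)
          * Complex.exp ((ξ i * x i : ℝ) * Complex.I)) := by
  rw [Finset.prod_mul_distrib]
  congr 1
  · push_cast
    rw [← Complex.exp_sum]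
    congr 1
    rw [Finset.mul_sum]
  · rw [← Complex.exp_sum]
    congr 1
    push_cast
    rw [Finset.sum_mul]

lemma myGaussPiC {n : ℕ} {a : ℝ} (ha : 0 < a) (m ξ : Fin n → ℝ) :
    ‖∫ x : Fin n → ℝ, (Real.exp (-a * ∑ i, (x i - m i) ^ 2) : ℂ)
        * Complex.exp (((∑ i, ξ i * x i : ℝ) : ℂ) * Complex.I)‖
      = Real.sqrt (Real.pi / a) ^ n * Real.exp (-(∑ i, ξ i ^ 2) / (4 * a)) := by
  simp_rw [myGaussPiC_eq m ξ]
  rw [MeasureTheory.integral_fintype_prod_volume_eq_prod (ι := Fin n)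
    (f := fun i t => (Real.exp (-a * (t - m i) ^ 2) : ℂ)
        * Complex.exp ((ξ i * t : ℝ) * Complex.I))]
  rw [norm_prod]
  simp_rw [myGauss1C ha]
  rw [Finset.prod_mul_distrib, ← Real.exp_sum]
  congr 1
  · simp
  · congr 1
    rw [← Finset.sum_div]
    congr 1
    exact Finset.sum_neg_distrib (f := fun i => ξ i ^ 2)

lemma myKey {n : ℕ} (f : (Fin n → ℝ) → ℂ) (hc : Continuous f) (hi : Integrable f) :
    ‖∫ x, f x‖ ^ 2
      ≤ ∫ h : Fin n → ℝ, ‖∫ x : Fin n → ℝ, f x * (starRingEnd ℂ) (f (x + h))‖ := by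
  have hconj : Integrable (fun x => (starRingEnd ℂ) (f x)) := by
    refine hi.norm.mono' (Continuous.aestronglyMeasurable (continuous_star.comp hc)) ?_
    filter_upwards with x
    simp
  have hFc : Continuous (Function.uncurry fun (x h : Fin n → ℝ) => f x * (starRingEnd ℂ) (f (x + h))) := by
    apply Continuous.mul
    · exact hc.comp continuous_fst
    · exact continuous_star.comp (hc.comp (continuous_fst.add continuous_snd))
  have hFint : Integrable
      (Function.uncurry fun (x h : Fin n → ℝ) => f x * (starRingEnd ℂ) (f (x + h)))
      (volume.prod volume) := by
    refine (integrable_prod_iff hFc.aestronglyMeasurable).2 ⟨?_, ?_⟩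
    · filter_upwards with x
      exact ((hconj.comp_add_left x).const_mul (f x))
    · have he : (fun x => ∫ h : Fin n → ℝ, ‖f x * (starRingEnd ℂ) (f (x + h))‖)
          = fun x => ‖f x‖ * ∫ y, ‖f y‖ := by
        funext x
        simp_rw [norm_mul, RCLike.norm_conj]
        rw [MeasureTheory.integral_const_mul]
        congr 1
        exact integral_add_left_eq_self (fun y => ‖f y‖) x
      simpa only [Function.uncurry] using he ▸ (hi.norm.mul_const _)
  have h2 : (∫ x, f x) * (starRingEnd ℂ) (∫ x, f x)
      = ∫ x, ∫ h : Fin n → ℝ, f x * (starRingEnd ℂ) (f (x + h)) := by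
    rw [← integral_conj, ← MeasureTheory.integral_mul_const]
    refine integral_congr_ae (Filter.Eventually.of_forall fun x => ?_)
    show f x * (∫ y, (starRingEnd ℂ) (f y)) = ∫ h : Fin n → ℝ, f x * (starRingEnd ℂ) (f (x + h))
    rw [← MeasureTheory.integral_const_mul]
    exact (integral_add_left_eq_self (fun y => f x * (starRingEnd ℂ) (f y)) x).symm
  calc ‖∫ x, f x‖ ^ 2 = ‖(∫ x, f x) * (starRingEnd ℂ) (∫ x, f x)‖ := by
        rw [norm_mul, RCLike.norm_conj, sq]
  _ = ‖∫ h : Fin n → ℝ, ∫ x : Fin n → ℝ, f x * (starRingEnd ℂ) (f (x + h))‖ := by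
        rw [h2, integral_integral_swap hFint]
  _ ≤ _ := norm_integral_le_integral_norm _

lemma eC_norm (t : ℝ) : ‖eC t‖ = 1 := by
  rw [eC, Complex.norm_exp]
  norm_num [Complex.mul_re]

lemma eC_add (s t : ℝ) : eC (s + t) = eC s * eC t := by
  rw [eC, eC, eC, ← Complex.exp_add]
  congr 1
  push_cast
  ring

lemma eC_conj (t : ℝ) : (starRingEnd ℂ) (eC t) = eC (-t) := by
  rw [eC, eC, ← Complex.exp_conj]
  congr 1
  simp only [map_mul, map_ofNat, Complex.conj_I, Complex.conj_ofReal]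
  push_cast
  ring

lemma mySigma {n : ℕ} (Fm : Matrix (Fin n) (Fin n) ℤ) (hdet : Fm.det ≠ 0) :
    ∃ σ > (0:ℝ), ∀ h : Fin n → ℝ,
      σ * (∑ i, h i ^ 2) ≤ ∑ i, (∑ j, (Fm i j : ℝ) * h j) ^ 2 := by
  set M : Matrix (Fin n) (Fin n) ℝ := Fm.map (Int.cast : ℤ → ℝ) with hM
  have hdetR : M.det ≠ 0 := by
    have h0 := (RingHom.map_det (Int.castRingHom ℝ) Fm).symm
    rw [RingHom.mapMatrix_apply] at h0
    have h1 : M.det = ((Fm.det : ℤ) : ℝ) := by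
      rw [hM]
      simpa using h0
    rw [h1]
    exact_mod_cast hdet
  have hMinv : M⁻¹ * M = 1 := Matrix.nonsing_inv_mul M (isUnit_iff_ne_zero.mpr hdetR)
  set T : ℝ := (∑ i, ∑ j, (M⁻¹ i j) ^ 2) + 1 with hT
  have hT0 : 0 < T := by positivity
  refine ⟨T⁻¹, by positivity, fun h => ?_⟩
  set gv : Fin n → ℝ := fun i => ∑ j, (Fm i j : ℝ) * h j with hgv
  have hg : M.mulVec h = gv := by
    funext i
    simp [Matrix.mulVec, dotProduct, hM, Matrix.map_apply, hgv]
  have hrec : ∀ i, h i = ∑ j, M⁻¹ i j * gv j := by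
    intro i
    have h1 : (M⁻¹).mulVec (M.mulVec h) = h := by
      rw [Matrix.mulVec_mulVec, hMinv, Matrix.one_mulVec]
    have h2 := congrFun h1 i
    rw [hg] at h2
    rw [← h2]
    simp [Matrix.mulVec, dotProduct]
  have hCS : ∀ i, h i ^ 2 ≤ (∑ j, (M⁻¹ i j) ^ 2) * ∑ j, gv j ^ 2 := by
    intro i
    rw [hrec i]
    exact Finset.sum_mul_sq_le_sq_mul_sq _ _ _
  have hsum : ∑ i, h i ^ 2 ≤ T * ∑ j, gv j ^ 2 := by
    calc ∑ i, h i ^ 2 ≤ ∑ i, (∑ j, (M⁻¹ i j) ^ 2) * ∑ j, gv j ^ 2 :=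
          Finset.sum_le_sum fun i _ => hCS i
    _ = (∑ i, ∑ j, (M⁻¹ i j) ^ 2) * ∑ j, gv j ^ 2 := by rw [Finset.sum_mul]
    _ ≤ T * ∑ j, gv j ^ 2 := by
        apply mul_le_mul_of_nonneg_right _ (by positivity)
        rw [hT]
        linarith
  rw [inv_mul_le_iff₀ hT0]
  exact hsum

lemma myGaussPi0 {n : ℕ} {a : ℝ} (ha : 0 < a) :
    ∫ x : Fin n → ℝ, Real.exp (-a * ∑ i, (x i) ^ 2) = Real.sqrt (Real.pi / a) ^ n := by
  have := myGaussPi (n := n) ha (fun _ => (0:ℝ))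
  simpa using this

lemma myGaussPi0_int {n : ℕ} {a : ℝ} (ha : 0 < a) :
    Integrable (fun x : Fin n → ℝ => Real.exp (-a * ∑ i, (x i) ^ 2)) := by
  have := myGaussPi_int (n := n) ha (fun _ => (0:ℝ))
  simpa using this

end Aux

end

set_option maxHeartbeats 1000000 in
theorem stmt3 (n : ℕ) (hn : 4 ≤ n) (Fm : Matrix (Fin n) (Fin n) ℤ)
    (hsym : ∀ i j, Fm i j = Fm j i) (heven : ∀ i, Even (Fm i i)) (hdet : Fm.det ≠ 0)
    (A : ℝ) (hA : 0 < A) (C₀ : ℝ) (hC₀ : 0 < C₀) :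
    ∃ C > (0 : ℝ), ∀ P : ℝ, 2 ≤ P → ∀ N : ℤ, N ≠ 0 →
      ∀ x₀ : Fin n → ℝ, l2 n x₀ ≤ C₀ → ∀ z : ℝ, ∀ β : Fin n → ℝ,
        ‖Iint n Fm N A P x₀ z β‖
            ≤ C * Real.log P ^ (2 * A * (n : ℝ)) * P ^ (n : ℝ) ∧
        (z ≠ 0 → ‖Iint n Fm N A P x₀ z β‖
            ≤ C * Real.log P ^ (2 * A * (n : ℝ)) * |z| ^ (-(n : ℝ) / 2)) := by
  obtain ⟨σ, hσ0, hσ⟩ := mySigma Fm hdet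
  have hπ : (0:ℝ) < Real.pi := Real.pi_pos
  have hπ1 : (1:ℝ) ≤ Real.pi := by linarith [Real.pi_gt_three]
  have hlog2 : (0:ℝ) < Real.log 2 := Real.log_pos (by norm_num)
  have hlog2' : Real.log 2 ≤ 1 := by linarith [Real.log_two_lt_d9]
  set L : ℝ := Real.log 2 ^ (A * (n:ℝ)) with hLdef
  have hL0 : 0 < L := Real.rpow_pos_of_pos hlog2 _
  have hL1 : L ≤ 1 := Real.rpow_le_one hlog2.le hlog2' (by positivity)
  have hLinv1 : (1:ℝ) ≤ L⁻¹ := (one_le_inv_iff₀).2 ⟨hL0, hL1⟩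
  set s : ℝ := σ ^ (-(n:ℝ)/4) with hsdef
  have hs0 : 0 < s := Real.rpow_pos_of_pos hσ0 _
  refine ⟨(L⁻¹)^2 * (1 + s), by positivity, ?_⟩
  intro P hP N hN x₀ hx₀ z β
  have hP0 : (0:ℝ) < P := by linarith
  set K : ℝ := Real.log P with hKdef
  have hKl : Real.log 2 ≤ K := Real.log_le_log (by norm_num) hP
  have hK0 : 0 < K := lt_of_lt_of_le hlog2 hKl
  set α : ℝ := P ^ (-2:ℝ) * K ^ (2*A) with hαdef
  have hα : 0 < α := mul_pos (Real.rpow_pos_of_pos hP0 _) (Real.rpow_pos_of_pos hK0 _)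
  set c : Fin n → ℝ := fun i => P * x₀ i with hcdef
  set Cw : ℝ := Real.pi ^ (-(n:ℝ)/2) * K ^ (A*(n:ℝ)) with hCwdef
  have hCw : 0 < Cw := mul_pos (Real.rpow_pos_of_pos hπ _) (Real.rpow_pos_of_pos hK0 _)
  have hkpos : 0 < K ^ (A*(n:ℝ)) := Real.rpow_pos_of_pos hK0 _
  have hkL : L ≤ K ^ (A*(n:ℝ)) := Real.rpow_le_rpow hlog2.le hKl (by positivity)
  have hsplit : K ^ (2*A*(n:ℝ)) = K ^ (A*(n:ℝ)) * K ^ (A*(n:ℝ)) := by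
    rw [← Real.rpow_add hK0]
    ring_nf
  have h1k : 1 ≤ L⁻¹ * K ^ (A*(n:ℝ)) := by
    rw [← inv_mul_cancel₀ hL0.ne']
    exact mul_le_mul_of_nonneg_left hkL (by positivity)
  have hgw : ∀ x : Fin n → ℝ, gw n A P x₀ x = Cw * Real.exp (-α * ∑ i, (x i - c i)^2) := by
    intro x
    simp only [gw, hCwdef, hαdef, hcdef, hKdef]
    congr 2
    ring
  -- the integrand
  set f : (Fin n → ℝ) → ℂ :=
    fun x => (gw n A P x₀ x : ℂ) * eC (z * (Qform n Fm x - (N:ℝ)) + ∑ i, β i * x i) with hfdef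
  have hIeq : Iint n Fm N A P x₀ z β = ∫ x, f x := rfl
  have hQc : Continuous (Qform n Fm) := by
    unfold Qform
    fun_prop
  have hgwc : Continuous (gw n A P x₀) := by
    unfold gw
    fun_prop
  have heCc : Continuous eC := by
    have : Continuous fun t : ℝ => 2 * (Real.pi:ℂ) * Complex.I * (t:ℂ) := by fun_prop
    exact Complex.continuous_exp.comp this
  have hfc : Continuous f := by
    apply Continuous.mul
    · exact Complex.continuous_ofReal.comp hgwc
    · apply heCc.comp
      apply Continuous.add
      · exact continuous_const.mul (hQc.sub continuous_const)
      · exact continuous_finset_sum _ fun i _ => continuous_const.mul (continuous_apply i)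
  have hfnorm : ∀ x, ‖f x‖ = gw n A P x₀ x := by
    intro x
    rw [hfdef]
    rw [norm_mul, eC_norm, mul_one, Complex.norm_real, Real.norm_eq_abs, abs_of_nonneg]
    rw [hgw x]
    positivity
  have hgwint : Integrable (gw n A P x₀) := by
    have : (gw n A P x₀) = fun x => Cw * Real.exp (-α * ∑ i, (x i - c i)^2) := funext hgw
    rw [this]
    exact (myGaussPi_int hα c).const_mul Cw
  have hfint : Integrable f :=
    hgwint.mono' hfc.aestronglyMeasurable
      (Filter.Eventually.of_forall fun x => le_of_eq (hfnorm x))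
  -- value of ∫ gw
  have hIgw : ∫ x, gw n A P x₀ x = Cw * Real.sqrt (Real.pi/α) ^ n := by
    simp_rw [hgw]
    rw [MeasureTheory.integral_const_mul, myGaussPi hα c]
  have hval : Cw * Real.sqrt (Real.pi/α) ^ n = P ^ (n:ℝ) := by
    have h1 : Real.sqrt (Real.pi/α) ^ n = (Real.pi/α) ^ ((n:ℝ)/2) := by
      rw [Real.sqrt_eq_rpow, ← Real.rpow_natCast ((Real.pi/α) ^ (1/2:ℝ)) n,
        ← Real.rpow_mul (by positivity)]
      congr 1
      ring
    have h2 : (Real.pi/α) ^ ((n:ℝ)/2) = Real.pi ^ ((n:ℝ)/2) * α ^ (-((n:ℝ)/2)) := by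
      rw [Real.div_rpow hπ.le hα.le, Real.rpow_neg hα.le, div_eq_mul_inv]
    have h3 : α ^ (-((n:ℝ)/2)) = P ^ (n:ℝ) * K ^ (-(A*(n:ℝ))) := by
      rw [hαdef, Real.mul_rpow (by positivity) (by positivity),
        ← Real.rpow_mul hP0.le, ← Real.rpow_mul hK0.le]
      congr 1
      · congr 1
        ring
      · congr 1
        ring
    rw [h1, h2, h3, hCwdef]
    have hπc : Real.pi ^ (-(n:ℝ)/2) * Real.pi ^ ((n:ℝ)/2) = 1 := by
      rw [← Real.rpow_add hπ, show -(n:ℝ)/2 + (n:ℝ)/2 = 0 by ring, Real.rpow_zero]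
    have hKc : K ^ (A*(n:ℝ)) * K ^ (-(A*(n:ℝ))) = 1 := by
      rw [← Real.rpow_add hK0, show A*(n:ℝ) + -(A*(n:ℝ)) = 0 by ring, Real.rpow_zero]
    calc Real.pi ^ (-(n:ℝ)/2) * K ^ (A*(n:ℝ)) * (Real.pi ^ ((n:ℝ)/2) * (P ^ (n:ℝ) * K ^ (-(A*(n:ℝ)))))
        = (Real.pi ^ (-(n:ℝ)/2) * Real.pi ^ ((n:ℝ)/2)) * (K ^ (A*(n:ℝ)) * K ^ (-(A*(n:ℝ)))) * P ^ (n:ℝ) := by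
          ring
    _ = P ^ (n:ℝ) := by rw [hπc, hKc]; ring
  have hb1 : ‖Iint n Fm N A P x₀ z β‖ ≤ P ^ (n:ℝ) := by
    rw [hIeq]
    calc ‖∫ x, f x‖ ≤ ∫ x, ‖f x‖ := norm_integral_le_integral_norm f
    _ = ∫ x, gw n A P x₀ x := by simp_rw [hfnorm]
    _ = P ^ (n:ℝ) := by rw [hIgw, hval]
  have hone : (1:ℝ) ≤ (L⁻¹)^2 * (1+s) * K ^ (2*A*(n:ℝ)) := by
    rw [hsplit]
    have h2 : (1:ℝ) ≤ (L⁻¹ * K ^ (A*(n:ℝ))) * (L⁻¹ * K ^ (A*(n:ℝ))) := by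
      have := mul_le_mul h1k h1k zero_le_one
        (by positivity : (0:ℝ) ≤ L⁻¹ * K ^ (A*(n:ℝ)))
      linarith
    calc (1:ℝ) ≤ (L⁻¹ * K ^ (A*(n:ℝ))) * (L⁻¹ * K ^ (A*(n:ℝ))) := h2
    _ ≤ ((L⁻¹ * K ^ (A*(n:ℝ))) * (L⁻¹ * K ^ (A*(n:ℝ)))) * (1+s) :=
        le_mul_of_one_le_right (by positivity) (by linarith)
    _ = (L⁻¹)^2 * (1+s) * (K ^ (A*(n:ℝ)) * K ^ (A*(n:ℝ))) := by ring
  constructor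
  · calc ‖Iint n Fm N A P x₀ z β‖ ≤ P ^ (n:ℝ) := hb1
    _ = 1 * P ^ (n:ℝ) := by ring
    _ ≤ (L⁻¹)^2 * (1+s) * K ^ (2*A*(n:ℝ)) * P ^ (n:ℝ) :=
        mul_le_mul_of_nonneg_right hone (by positivity)
  · intro hz
    have hz2 : (0:ℝ) < z^2 := by positivity
    set c2 : ℝ := Real.pi^2 * z^2 * σ / (2*α) with hc2def
    have hc2 : 0 < c2 := by positivity
    set D : ℝ := Cw^2 * Real.sqrt (Real.pi/(2*α)) ^ n with hDdef
    have hD0 : 0 < D := by positivity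
    have h2α : (0:ℝ) < 2*α := by linarith
    -- quadratic form expansion
    have Qexpand : ∀ x h : Fin n → ℝ, Qform n Fm (x + h)
        = Qform n Fm x + (∑ i, (∑ j, (Fm i j:ℝ) * h j) * x i) + Qform n Fm h := by
      intro x h
      have hswap : ∑ i, ∑ j, (Fm i j:ℝ) * h i * x j = ∑ i, ∑ j, (Fm i j:ℝ) * x i * h j := by
        rw [Finset.sum_comm]
        refine Finset.sum_congr rfl fun i _ => Finset.sum_congr rfl fun j _ => ?_
        rw [show Fm j i = Fm i j from hsym j i]
        ring
      have e1 : ∀ i, ∑ j, (Fm i j:ℝ) * ((x+h) i) * ((x+h) j)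
          = (∑ j, (Fm i j:ℝ) * x i * x j) + ((∑ j, (Fm i j:ℝ) * x i * h j)
            + ((∑ j, (Fm i j:ℝ) * h i * x j) + ∑ j, (Fm i j:ℝ) * h i * h j)) := by
        intro i
        rw [← Finset.sum_add_distrib, ← Finset.sum_add_distrib, ← Finset.sum_add_distrib]
        refine Finset.sum_congr rfl fun j _ => ?_
        simp only [Pi.add_apply]
        ring
      simp only [Qform]
      rw [Finset.sum_congr rfl fun i _ => e1 i]
      rw [Finset.sum_add_distrib, Finset.sum_add_distrib, Finset.sum_add_distrib, hswap]
      have hL2 : ∑ i, (∑ j, (Fm i j:ℝ) * h j) * x i = ∑ i, ∑ j, (Fm i j:ℝ) * x i * h j := by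
        refine Finset.sum_congr rfl fun i _ => ?_
        rw [Finset.sum_mul]
        exact Finset.sum_congr rfl fun j _ => by ring
      rw [hL2]
      ring
    -- pointwise bound on the inner integral
    have hJ : ∀ h : Fin n → ℝ, ‖∫ x : Fin n → ℝ, f x * (starRingEnd ℂ) (f (x + h))‖
        ≤ D * Real.exp (-c2 * ∑ i, (h i)^2) := by
      intro h
      set g : Fin n → ℝ := fun i => ∑ j, (Fm i j:ℝ) * h j with hgdef
      set m : Fin n → ℝ := fun i => c i - h i / 2 with hmdef
      set θ : ℝ := -(z * Qform n Fm h) - ∑ i, β i * h i with hθdef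
      set E1 : ℝ := Real.exp (-(α/2) * ∑ i, (h i)^2) with hE1def
      have hE10 : 0 < E1 := Real.exp_pos _
      have wid : ∀ x : Fin n → ℝ, gw n A P x₀ x * gw n A P x₀ (x + h)
          = (Cw^2 * E1) * Real.exp (-(2*α) * ∑ i, (x i - m i)^2) := by
        intro x
        rw [hgw, hgw]
        rw [show Cw * Real.exp (-α * ∑ i, (x i - c i)^2)
              * (Cw * Real.exp (-α * ∑ i, ((x+h) i - c i)^2))
            = Cw^2 * (Real.exp (-α * ∑ i, (x i - c i)^2)
              * Real.exp (-α * ∑ i, ((x+h) i - c i)^2)) from by ring]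
        rw [← Real.exp_add, hE1def, mul_assoc, ← Real.exp_add]
        congr 2
        have hi2 : ∀ i, ((x i - c i)^2 + ((x+h) i - c i)^2) = 2*(x i - m i)^2 + (h i)^2/2 := by
          intro i
          simp only [Pi.add_apply, hmdef]
          ring
        have hsum2 : (∑ i, (x i - c i)^2) + (∑ i, ((x+h) i - c i)^2)
            = 2*(∑ i, (x i - m i)^2) + (∑ i, (h i)^2)/2 := by
          rw [← Finset.sum_add_distrib, Finset.sum_congr rfl fun i _ => hi2 i,
            Finset.sum_add_distrib, ← Finset.mul_sum, ← Finset.sum_div]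
        linear_combination (-α) * hsum2
      have hφ : ∀ x : Fin n → ℝ,
          (z * (Qform n Fm x - (N:ℝ)) + ∑ i, β i * x i)
            + -(z * (Qform n Fm (x + h) - (N:ℝ)) + ∑ i, β i * ((x + h) i))
          = θ + (-z) * ∑ i, g i * x i := by
        intro x
        rw [Qexpand x h, hθdef]
        have hβ : ∑ i, β i * ((x+h) i) = (∑ i, β i * x i) + ∑ i, β i * h i := by
          rw [← Finset.sum_add_distrib]
          refine Finset.sum_congr rfl fun i _ => ?_
          simp only [Pi.add_apply]
          ring
        rw [hβ]
        simp only [hgdef]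
        ring
      have hphase3 : ∀ x : Fin n → ℝ, eC ((-z) * ∑ i, g i * x i)
          = Complex.exp (((∑ i, (-(2*Real.pi*z) * g i) * x i : ℝ) : ℂ) * Complex.I) := by
        intro x
        have hsum3 : ∑ i, (-(2*Real.pi*z) * g i) * x i = (-(2*Real.pi*z)) * ∑ i, g i * x i := by
          rw [Finset.mul_sum]
          exact Finset.sum_congr rfl fun i _ => by ring
        rw [eC, hsum3]
        congr 1
        push_cast
        ring
      have hpoint : ∀ x : Fin n → ℝ, f x * (starRingEnd ℂ) (f (x + h))
          = ((Cw^2 * E1 : ℝ) : ℂ) * eC θ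
            * ((Real.exp (-(2*α) * ∑ i, (x i - m i)^2) : ℂ)
              * Complex.exp (((∑ i, (-(2*Real.pi*z) * g i) * x i : ℝ) : ℂ) * Complex.I)) := by
        intro x
        rw [hfdef]
        simp only []
        rw [map_mul, Complex.conj_ofReal, eC_conj]
        rw [mul_mul_mul_comm, ← Complex.ofReal_mul, ← eC_add]
        rw [hφ x, eC_add, hphase3 x, wid x]
        push_cast
        ring
      have hJeq : ∫ x : Fin n → ℝ, f x * (starRingEnd ℂ) (f (x + h))
          = ((Cw^2 * E1 : ℝ) : ℂ) * eC θ
            * ∫ x : Fin n → ℝ, ((Real.exp (-(2*α) * ∑ i, (x i - m i)^2) : ℂ)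
              * Complex.exp (((∑ i, (-(2*Real.pi*z) * g i) * x i : ℝ) : ℂ) * Complex.I)) := by
        simp_rw [hpoint, mul_assoc]
        rw [MeasureTheory.integral_const_mul, MeasureTheory.integral_const_mul]
      rw [hJeq, norm_mul, norm_mul, eC_norm, mul_one, Complex.norm_real, Real.norm_eq_abs,
        abs_of_nonneg (by positivity)]
      rw [myGaussPiC h2α m (fun i => -(2*Real.pi*z) * g i)]
      have hξ : ∑ i, (-(2*Real.pi*z) * g i)^2 = 4*Real.pi^2*z^2 * ∑ i, (g i)^2 := by
        rw [Finset.mul_sum]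
        exact Finset.sum_congr rfl fun i _ => by ring
      have hE1le : E1 ≤ 1 := by
        rw [hE1def, Real.exp_le_one_iff]
        have h0 : (0:ℝ) ≤ ∑ i, (h i)^2 := by positivity
        have h0' : (0:ℝ) ≤ (α/2) * ∑ i, (h i)^2 := by positivity
        linarith
      have hkey : σ * ∑ i, (h i)^2 ≤ ∑ i, (g i)^2 := by
        simpa only [hgdef] using hσ h
      have hmono : Real.exp (-(∑ i, (-(2*Real.pi*z) * g i)^2) / (4*(2*α)))
          ≤ Real.exp (-c2 * ∑ i, (h i)^2) := by
        apply Real.exp_le_exp.2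
        rw [hξ, hc2def, div_le_iff₀ (by positivity : (0:ℝ) < 4*(2*α))]
        have hc2e : (-(Real.pi^2 * z^2 * σ / (2*α)) * ∑ i, (h i)^2) * (4*(2*α))
            = -(4 * Real.pi^2 * z^2 * (σ * ∑ i, (h i)^2)) := by
          field_simp
        rw [hc2e, neg_le_neg_iff]
        have := mul_le_mul_of_nonneg_left hkey
          (by positivity : (0:ℝ) ≤ 4 * Real.pi ^ 2 * z ^ 2)
        linarith
      have hfin : Cw ^ 2 * E1 * (Real.sqrt (Real.pi/(2*α)) ^ n
            * Real.exp (-(∑ i, (-(2*Real.pi*z) * g i) ^ 2) / (4*(2*α))))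
          ≤ Cw ^ 2 * 1 * (Real.sqrt (Real.pi/(2*α)) ^ n * Real.exp (-c2 * ∑ i, (h i) ^ 2)) := by
        apply mul_le_mul
        · exact mul_le_mul_of_nonneg_left hE1le (by positivity)
        · exact mul_le_mul_of_nonneg_left hmono (by positivity)
        · positivity
        · positivity
      calc Cw ^ 2 * E1 * (Real.sqrt (Real.pi/(2*α)) ^ n
            * Real.exp (-(∑ i, (-(2*Real.pi*z) * g i) ^ 2) / (4*(2*α))))
          ≤ Cw ^ 2 * 1 * (Real.sqrt (Real.pi/(2*α)) ^ n * Real.exp (-c2 * ∑ i, (h i) ^ 2)) := hfin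
      _ = D * Real.exp (-c2 * ∑ i, (h i) ^ 2) := by rw [hDdef]; ring
    -- assemble via the double-integral bound
    have hsq : ‖∫ x, f x‖ ^ 2
        ≤ ∫ h : Fin n → ℝ, ‖∫ x : Fin n → ℝ, f x * (starRingEnd ℂ) (f (x + h))‖ :=
      myKey f hfc hfint
    have hint2 : (∫ h : Fin n → ℝ, ‖∫ x : Fin n → ℝ, f x * (starRingEnd ℂ) (f (x + h))‖)
        ≤ D * Real.sqrt (Real.pi/c2) ^ n := by
      calc (∫ h : Fin n → ℝ, ‖∫ x : Fin n → ℝ, f x * (starRingEnd ℂ) (f (x + h))‖)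
          ≤ ∫ h : Fin n → ℝ, D * Real.exp (-c2 * ∑ i, (h i) ^ 2) :=
            integral_mono_of_nonneg (Filter.Eventually.of_forall fun h => norm_nonneg _)
              ((myGaussPi0_int hc2).const_mul D) (Filter.Eventually.of_forall hJ)
      _ = D * Real.sqrt (Real.pi/c2) ^ n := by
          rw [MeasureTheory.integral_const_mul, myGaussPi0 hc2]
    have hπ0 : Real.pi ≠ 0 := hπ.ne'
    have hα0 : α ≠ 0 := hα.ne'
    have hσ0' : σ ≠ 0 := hσ0.ne'
    have hDval : D * Real.sqrt (Real.pi/c2) ^ n = Cw ^ 2 * Real.sqrt (1/(z^2*σ)) ^ n := by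
      rw [hDdef, mul_assoc, ← mul_pow, ← Real.sqrt_mul (by positivity)]
      congr 3
      rw [hc2def]
      field_simp
    have h4 : ‖∫ x, f x‖ ^ 2 ≤ Cw ^ 2 * Real.sqrt (1/(z^2*σ)) ^ n := by
      calc ‖∫ x, f x‖ ^ 2
          ≤ ∫ h : Fin n → ℝ, ‖∫ x : Fin n → ℝ, f x * (starRingEnd ℂ) (f (x + h))‖ := hsq
      _ ≤ D * Real.sqrt (Real.pi/c2) ^ n := hint2
      _ = Cw ^ 2 * Real.sqrt (1/(z^2*σ)) ^ n := hDval
    have hn2 : ‖∫ x, f x‖ ≤ Cw * Real.sqrt (Real.sqrt (1/(z^2*σ)) ^ n) := by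
      calc ‖∫ x, f x‖ = Real.sqrt (‖∫ x, f x‖ ^ 2) := (Real.sqrt_sq (norm_nonneg _)).symm
      _ ≤ Real.sqrt (Cw ^ 2 * Real.sqrt (1/(z^2*σ)) ^ n) := Real.sqrt_le_sqrt h4
      _ = Cw * Real.sqrt (Real.sqrt (1/(z^2*σ)) ^ n) := by
          rw [Real.sqrt_mul (by positivity), Real.sqrt_sq hCw.le]
    have hzσ : (0:ℝ) < z ^ 2 * σ := by positivity
    have hu : Real.sqrt (Real.sqrt (1/(z^2*σ)) ^ n) = s * |z| ^ (-(n:ℝ)/2) := by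
      rw [Real.sqrt_eq_rpow, Real.sqrt_eq_rpow,
        ← Real.rpow_natCast ((1/(z^2*σ)) ^ (1/2:ℝ)) n,
        ← Real.rpow_mul (by positivity), ← Real.rpow_mul (by positivity)]
      rw [one_div, Real.inv_rpow hzσ.le, ← Real.rpow_neg hzσ.le]
      rw [Real.mul_rpow (sq_nonneg z) hσ0.le, ← sq_abs z,
        ← Real.rpow_natCast |z| 2, ← Real.rpow_mul (abs_nonneg z)]
      rw [hsdef, mul_comm]
      congr 1
      · congr 1
        push_cast
        ring
      · congr 1
        push_cast
        ring
    have hnhalf : (0:ℝ) ≤ (n:ℝ)/2 := by positivity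
    have hCwle : Cw ≤ K ^ (A*(n:ℝ)) := by
      rw [hCwdef]
      have hle1 : Real.pi ^ (-(n:ℝ)/2) ≤ 1 := by
        apply Real.rpow_le_one_of_one_le_of_nonpos hπ1
        rw [neg_div]
        exact neg_nonpos.2 hnhalf
      exact mul_le_of_le_one_left hkpos.le hle1
    have hcmp : K ^ (A*(n:ℝ)) * s ≤ (L⁻¹)^2 * (1+s) * K ^ (2*A*(n:ℝ)) := by
      rw [hsplit]
      have ha1 : K ^ (A*(n:ℝ)) ≤ L⁻¹ * K ^ (A*(n:ℝ)) :=
        le_mul_of_one_le_left hkpos.le hLinv1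
      have ha2 : L⁻¹ * K ^ (A*(n:ℝ)) ≤ (L⁻¹ * K ^ (A*(n:ℝ))) * (L⁻¹ * K ^ (A*(n:ℝ))) :=
        le_mul_of_one_le_left (by positivity) h1k
      have e1 : K ^ (A*(n:ℝ)) ≤ (L⁻¹ * K ^ (A*(n:ℝ))) * (L⁻¹ * K ^ (A*(n:ℝ))) :=
        ha1.trans ha2
      calc K ^ (A*(n:ℝ)) * s
          ≤ ((L⁻¹ * K ^ (A*(n:ℝ))) * (L⁻¹ * K ^ (A*(n:ℝ)))) * s :=
            mul_le_mul_of_nonneg_right e1 hs0.le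
      _ ≤ ((L⁻¹ * K ^ (A*(n:ℝ))) * (L⁻¹ * K ^ (A*(n:ℝ)))) * (1+s) :=
            mul_le_mul_of_nonneg_left (by linarith) (by positivity)
      _ = (L⁻¹)^2 * (1+s) * (K ^ (A*(n:ℝ)) * K ^ (A*(n:ℝ))) := by ring
    rw [hIeq]
    calc ‖∫ x, f x‖ ≤ Cw * (s * |z| ^ (-(n:ℝ)/2)) := by rw [← hu]; exact hn2
    _ = Cw * s * |z| ^ (-(n:ℝ)/2) := by ring
    _ ≤ K ^ (A*(n:ℝ)) * s * |z| ^ (-(n:ℝ)/2) := by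
        apply mul_le_mul_of_nonneg_right _ (by positivity)
        exact mul_le_mul_of_nonneg_right hCwle hs0.le
    _ ≤ (L⁻¹)^2 * (1+s) * K ^ (2*A*(n:ℝ)) * |z| ^ (-(n:ℝ)/2) :=
        mul_le_mul_of_nonneg_right hcmp (by positivity)
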